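/- Let v₀, v₁, …, v_L be vectors in a real inner product space and let v̄ = (1/(L+1)) ∑_{l=0}^{L} v_l be their mean. Then ∑_{l=0}^{L} ‖v_l − v̄‖² ≤ (1 / (4 sin²(π / (2(L+1))))) · ∑_{l=0}^{L−1} ‖v_{l+1} − v_l‖². -/

import Mathlib

open Finset Real

-- telescoping lemma
lemma tele (β : ℝ) (n : ℕ) :
    ∑ k ∈ Finset.range n, 2 * Real.sin β * Real.cos (2 * k * β)
      = Real.sin ((2 * n - 1) * β) + Real.sin β := by
  induction n with
  | zero =>
      have : (2 * ((0:ℕ):ℝ) - 1) * β = -β := by push_cast; ring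
      simp [this, Real.sin_neg]
  | succ n ih =>
      rw [Finset.sum_range_succ, ih]
      have h2 : (2 * (n:ℝ) - 1) * β = 2 * n * β - β := by ring
      have h1 : (2 * ((n+1:ℕ):ℝ) - 1) * β = 2 * n * β + β := by push_cast; ring
      rw [h2, h1, Real.sin_add, Real.sin_sub]
      ring
lemma cosSum (n j : ℕ) (hn : 0 < n) (hj : 0 < j) (hj2 : j < 2 * n) :
    ∑ k ∈ Finset.range n, Real.cos ((j:ℝ) * k * (π / n)) = if Even j then 0 else 1 := by
  have hπ := Real.pi_pos
  have hn' : (0:ℝ) < n := by exact_mod_cast hn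
  set β : ℝ := j * π / (2 * n) with hβ
  have hβpos : 0 < β := by positivity
  have hβlt : β < π := by
    rw [hβ, div_lt_iff₀ (by positivity)]
    have : (j:ℝ) < 2 * n := by exact_mod_cast hj2
    nlinarith
  have hs : Real.sin β ≠ 0 := ne_of_gt (Real.sin_pos_of_pos_of_lt_pi hβpos hβlt)
  have harg : ∀ k : ℕ, (j:ℝ) * k * (π / n) = 2 * k * β := by
    intro k; rw [hβ]; field_simp
  have key : 2 * Real.sin β * ∑ k ∈ Finset.range n, Real.cos ((j:ℝ) * k * (π / n))
      = Real.sin ((2 * n - 1) * β) + Real.sin β := by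
    rw [Finset.mul_sum]
    rw [← tele β n]
    exact Finset.sum_congr rfl fun k _ => by rw [harg]
  have hend : Real.sin ((2 * (n:ℝ) - 1) * β) = - ((-1:ℝ)^j) * Real.sin β := by
    have h1 : (2 * (n:ℝ) - 1) * β = j * π - β := by
      rw [hβ]; field_simp
    have hcos : Real.cos ((j:ℝ) * π) = (-1:ℝ)^j := by
      have := Real.cos_nat_mul_pi_sub 0 j
      simpa using this
    rw [h1, Real.sin_sub, Real.sin_nat_mul_pi, hcos]; ring
  apply mul_left_cancel₀ (a := 2 * Real.sin β) (by positivity)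
  rw [key, hend]
  rcases Nat.even_or_odd j with he | ho
  · rw [if_pos he, Even.neg_one_pow he]; ring
  · rw [if_neg (Nat.not_even_iff_odd.mpr ho), Odd.neg_one_pow ho]; ring
lemma cosOrthAux (n l l' : ℕ) (hn : 0 < n) (hl : l < n) (hl' : l' ≤ l) :
    ∑ k ∈ Finset.range n,
        Real.cos (((l:ℝ) + 1/2) * k * (π / n)) * Real.cos (((l':ℝ) + 1/2) * k * (π / n))
      = ((if l = l' then (n:ℝ) else 0) + 1) / 2 := by
  have hterm : ∀ k : ℕ,
      Real.cos (((l:ℝ) + 1/2) * k * (π / n)) * Real.cos (((l':ℝ) + 1/2) * k * (π / n))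
        = (Real.cos (((l + l' + 1 : ℕ):ℝ) * k * (π / n))
            + Real.cos (((l - l' : ℕ):ℝ) * k * (π / n))) / 2 := by
    intro k
    have hA : ((l + l' + 1 : ℕ):ℝ) * k * (π / n)
        = (((l:ℝ) + 1/2) * k * (π / n)) + (((l':ℝ) + 1/2) * k * (π / n)) := by
      push_cast; ring
    have hB : ((l - l' : ℕ):ℝ) * k * (π / n)
        = (((l:ℝ) + 1/2) * k * (π / n)) - (((l':ℝ) + 1/2) * k * (π / n)) := by
      rw [Nat.cast_sub hl']; push_cast; ring
    rw [hA, hB, Real.cos_add, Real.cos_sub]; ring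
  rw [Finset.sum_congr rfl fun k _ => hterm k]
  rw [← Finset.sum_div, Finset.sum_add_distrib]
  have hb1 : l + l' + 1 < 2 * n := by omega
  have hsum1 : ∑ k ∈ Finset.range n, Real.cos (((l + l' + 1 : ℕ):ℝ) * k * (π / n))
      = if Even (l + l' + 1) then 0 else 1 := cosSum n _ hn (Nat.succ_pos _) hb1
  rcases eq_or_lt_of_le hl' with heq | hlt
  · have hodd : ¬ Even (l + l' + 1) := by
      rw [← heq]; simp [Nat.even_add_one, Nat.even_add]
    have hd : l - l' = 0 := by omega
    have h2 : ∑ k ∈ Finset.range n, Real.cos (((l - l' : ℕ):ℝ) * k * (π / n)) = n := by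
      rw [hd]; simp
    rw [hsum1, h2, if_neg hodd, if_pos heq.symm]; ring
  · have hd : 0 < l - l' := by omega
    have hpar : Even (l + l' + 1) ↔ ¬ Even (l - l') := by
      rw [Nat.even_add_one, Nat.even_add, Nat.even_sub hl']
    have hsum2 : ∑ k ∈ Finset.range n, Real.cos (((l - l' : ℕ):ℝ) * k * (π / n))
        = if Even (l - l') then 0 else 1 := cosSum n (l - l') hn hd (by omega)
    rw [hsum1, hsum2, if_neg (by omega : ¬ l = l')]
    by_cases h : Even (l - l')
    · rw [if_pos h, if_neg (fun hh => (hpar.mp hh) h)]; norm_num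
    · rw [if_neg h, if_pos (hpar.mpr h)]
lemma cosSum1 (n j : ℕ) (hn : 0 < n) (hj : 0 < j) (hj2 : j < 2 * n) :
    ∑ l ∈ Finset.range (n - 1), Real.cos ((j:ℝ) * ((l:ℝ) + 1) * (π / n))
      = (if Even j then 0 else 1) - 1 := by
  have h := cosSum n j hn hj hj2
  have hn1 : n = (n - 1) + 1 := by omega
  rw [hn1, Finset.sum_range_succ'] at h
  rw [← hn1] at h
  push_cast at h
  norm_num at h
  linarith

lemma sinOrthAux (n k m : ℕ) (hn : 0 < n) (hk2 : k < n) (hm : 0 < m) (hm' : m ≤ k) :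
    ∑ l ∈ Finset.range (n - 1),
        Real.sin (((l:ℝ) + 1) * k * (π / n)) * Real.sin (((l:ℝ) + 1) * m * (π / n))
      = if k = m then (n:ℝ) / 2 else 0 := by
  have hterm : ∀ l : ℕ,
      Real.sin (((l:ℝ) + 1) * k * (π / n)) * Real.sin (((l:ℝ) + 1) * m * (π / n))
        = (Real.cos (((k - m : ℕ):ℝ) * ((l:ℝ) + 1) * (π / n))
            - Real.cos (((k + m : ℕ):ℝ) * ((l:ℝ) + 1) * (π / n))) / 2 := by
    intro l
    have hA : ((k - m : ℕ):ℝ) * ((l:ℝ) + 1) * (π / n)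
        = (((l:ℝ) + 1) * k * (π / n)) - (((l:ℝ) + 1) * m * (π / n)) := by
      rw [Nat.cast_sub hm']; ring
    have hB : ((k + m : ℕ):ℝ) * ((l:ℝ) + 1) * (π / n)
        = (((l:ℝ) + 1) * k * (π / n)) + (((l:ℝ) + 1) * m * (π / n)) := by
      push_cast; ring
    rw [hA, hB, Real.cos_add, Real.cos_sub]; ring
  rw [Finset.sum_congr rfl fun l _ => hterm l, ← Finset.sum_div, Finset.sum_sub_distrib]
  have hsum2 : ∑ l ∈ Finset.range (n - 1), Real.cos (((k + m : ℕ):ℝ) * ((l:ℝ) + 1) * (π / n))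
      = (if Even (k + m) then 0 else 1) - 1 := cosSum1 n (k + m) hn (by omega) (by omega)
  rcases eq_or_lt_of_le hm' with heq | hlt
  · have hd : k - m = 0 := by omega
    have h1 : ∑ l ∈ Finset.range (n - 1),
        Real.cos (((k - m : ℕ):ℝ) * ((l:ℝ) + 1) * (π / n)) = (n:ℝ) - 1 := by
      rw [hd]; push_cast
      simp
      rw [Nat.cast_sub hn, Nat.cast_one]
    have hev : Even (k + m) := by rw [heq]; exact ⟨m, by omega⟩
    rw [h1, hsum2, if_pos heq.symm, if_pos hev]
    ring
  · have hd : 0 < k - m := by omega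
    have h1 : ∑ l ∈ Finset.range (n - 1),
        Real.cos (((k - m : ℕ):ℝ) * ((l:ℝ) + 1) * (π / n))
          = (if Even (k - m) then 0 else 1) - 1 :=
      cosSum1 n (k - m) hn hd (by omega)
    have hpar : Even (k - m) ↔ Even (k + m) := by
      rw [Nat.even_sub hm', Nat.even_add]
    rw [h1, hsum2, if_neg (by omega : ¬ k = m)]
    by_cases h : Even (k + m)
    · rw [if_pos h, if_pos (hpar.mpr h)]; ring
    · rw [if_neg h, if_neg (fun hh => h (hpar.mp hh))]; ring

noncomputable def cc (n k l : ℕ) : ℝ := Real.cos (((l:ℝ) + 1/2) * k * (π / n))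

lemma cosOrth (n l l' : ℕ) (hn : 0 < n) (hl : l < n) (hl' : l' < n) :
    ∑ k ∈ Finset.Ico 1 n, cc n k l * cc n k l'
      = ((if l = l' then (n:ℝ) else 0) - 1) / 2 := by
  have hrange : ∑ k ∈ Finset.range n, cc n k l * cc n k l'
      = ((if l = l' then (n:ℝ) else 0) + 1) / 2 := by
    rcases le_total l' l with h | h
    · exact cosOrthAux n l l' hn hl h
    · have h2 := cosOrthAux n l' l hn hl' h
      rw [Finset.sum_congr rfl fun k _ => mul_comm (cc n k l) (cc n k l')]
      unfold cc
      rw [h2]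
      by_cases he : l = l'
      · rw [if_pos he, if_pos he.symm]
      · rw [if_neg he, if_neg (fun hh => he hh.symm)]
  have h0 : cc n 0 l * cc n 0 l' = 1 := by
    unfold cc; norm_num
  rw [Finset.range_eq_Ico, Finset.sum_eq_sum_Ico_succ_bot hn] at hrange
  rw [h0] at hrange
  linarith

noncomputable def ww {E : Type*} [NormedAddCommGroup E] [InnerProductSpace ℝ E]
    (n : ℕ) (v : ℕ → E) (k : ℕ) : E := ∑ l ∈ Finset.range n, cc n k l • v l

lemma key1 {E : Type*} [NormedAddCommGroup E] [InnerProductSpace ℝ E]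
    (n : ℕ) (hn : 0 < n) (v : ℕ → E) (l : ℕ) (hl : l < n) :
    v l - (n:ℝ)⁻¹ • ∑ k ∈ Finset.range n, v k
      = (n:ℝ)⁻¹ • ∑ k ∈ Finset.Ico 1 n, (2 * cc n k l) • ww n v k := by
  have hnR : (0:ℝ) < n := by exact_mod_cast hn
  have expand : ∑ k ∈ Finset.Ico 1 n, (2 * cc n k l) • ww n v k
      = ∑ l' ∈ Finset.range n, (∑ k ∈ Finset.Ico 1 n, 2 * (cc n k l * cc n k l')) • v l' := by
    calc ∑ k ∈ Finset.Ico 1 n, (2 * cc n k l) • ww n v k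
        = ∑ k ∈ Finset.Ico 1 n, ∑ l' ∈ Finset.range n,
            (2 * (cc n k l * cc n k l')) • v l' := by
          refine Finset.sum_congr rfl fun k _ => ?_
          rw [ww, Finset.smul_sum]
          refine Finset.sum_congr rfl fun l' _ => ?_
          rw [smul_smul, mul_assoc]
      _ = ∑ l' ∈ Finset.range n, ∑ k ∈ Finset.Ico 1 n,
            (2 * (cc n k l * cc n k l')) • v l' := Finset.sum_comm
      _ = ∑ l' ∈ Finset.range n,
            (∑ k ∈ Finset.Ico 1 n, 2 * (cc n k l * cc n k l')) • v l' := by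
          exact Finset.sum_congr rfl fun l' _ => (Finset.sum_smul).symm
  have coeff : ∀ l' ∈ Finset.range n,
      (∑ k ∈ Finset.Ico 1 n, 2 * (cc n k l * cc n k l')) • v l'
        = ((if l = l' then (n:ℝ) else 0) - 1) • v l' := by
    intro l' hl'
    rw [← Finset.mul_sum, cosOrth n l l' hn hl (Finset.mem_range.mp hl')]
    congr 1
    ring
  rw [expand, Finset.sum_congr rfl coeff]
  have split : ∑ l' ∈ Finset.range n, ((if l = l' then (n:ℝ) else 0) - 1) • v l'
      = (n:ℝ) • v l - ∑ l' ∈ Finset.range n, v l' := by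
    rw [Finset.sum_congr rfl (fun l' _ => sub_smul _ _ _), Finset.sum_sub_distrib]
    congr 1
    · have hite : ∀ l' ∈ Finset.range n,
          (if l = l' then (n:ℝ) else 0) • v l' = if l = l' then (n:ℝ) • v l' else 0 :=
        fun l' _ => by split_ifs <;> simp
      rw [Finset.sum_congr rfl hite,
        Finset.sum_ite_eq (Finset.range n) l (fun l' => (n:ℝ) • v l'),
        if_pos (Finset.mem_range.mpr hl)]
    · exact Finset.sum_congr rfl fun l' _ => one_smul _ _
  rw [split, smul_sub, smul_smul, inv_mul_cancel₀ (ne_of_gt hnR), one_smul]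

lemma key0 {E : Type*} [NormedAddCommGroup E] [InnerProductSpace ℝ E]
    (n : ℕ) (hn : 0 < n) (v : ℕ → E) :
    ∑ l ∈ Finset.range n, (v l - (n:ℝ)⁻¹ • ∑ k ∈ Finset.range n, v k) = 0 := by
  have hnR : (0:ℝ) < n := by exact_mod_cast hn
  rw [Finset.sum_sub_distrib, Finset.sum_const, Finset.card_range]
  rw [← Nat.cast_smul_eq_nsmul ℝ, smul_smul, mul_inv_cancel₀ (ne_of_gt hnR), one_smul,
    sub_self]

lemma key2 {E : Type*} [NormedAddCommGroup E] [InnerProductSpace ℝ E]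
    (n : ℕ) (hn : 0 < n) (v : ℕ → E) :
    ∑ l ∈ Finset.range n, ‖v l - (n:ℝ)⁻¹ • ∑ k ∈ Finset.range n, v k‖ ^ 2
      = ∑ k ∈ Finset.Ico 1 n, (2 / (n:ℝ)) * ‖ww n v k‖ ^ 2 := by
  have hnR : (0:ℝ) < n := by exact_mod_cast hn
  set vb : E := (n:ℝ)⁻¹ • ∑ k ∈ Finset.range n, v k with hvb
  calc ∑ l ∈ Finset.range n, ‖v l - vb‖ ^ 2
      = ∑ l ∈ Finset.range n,
          ((inner ℝ (v l - vb) (v l) : ℝ) - (inner ℝ (v l - vb) vb : ℝ)) := by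
        refine Finset.sum_congr rfl fun l hl => ?_
        rw [← real_inner_self_eq_norm_sq, inner_sub_right]
    _ = ∑ l ∈ Finset.range n, (inner ℝ (v l - vb) (v l) : ℝ)
          - ∑ l ∈ Finset.range n, (inner ℝ (v l - vb) vb : ℝ) := Finset.sum_sub_distrib _ _
    _ = ∑ l ∈ Finset.range n, (inner ℝ (v l - vb) (v l) : ℝ) := by
        rw [← sum_inner, key0 n hn v, inner_zero_left, sub_zero]
    _ = ∑ l ∈ Finset.range n, ∑ k ∈ Finset.Ico 1 n,
          ((n:ℝ)⁻¹ * (2 * cc n k l)) * (inner ℝ (ww n v k) (v l) : ℝ) := by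
        refine Finset.sum_congr rfl fun l hl => ?_
        rw [key1 n hn v l (Finset.mem_range.mp hl), real_inner_smul_left, sum_inner,
          Finset.mul_sum]
        exact Finset.sum_congr rfl fun k _ => by rw [real_inner_smul_left]; ring
    _ = ∑ k ∈ Finset.Ico 1 n, ∑ l ∈ Finset.range n,
          ((n:ℝ)⁻¹ * (2 * cc n k l)) * (inner ℝ (ww n v k) (v l) : ℝ) := Finset.sum_comm
    _ = ∑ k ∈ Finset.Ico 1 n, (2 / (n:ℝ)) * ‖ww n v k‖ ^ 2 := by
        refine Finset.sum_congr rfl fun k _ => ?_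
        have : ∑ l ∈ Finset.range n,
            ((n:ℝ)⁻¹ * (2 * cc n k l)) * (inner ℝ (ww n v k) (v l) : ℝ)
            = (2 / (n:ℝ)) * ∑ l ∈ Finset.range n,
                (cc n k l) * (inner ℝ (ww n v k) (v l) : ℝ) := by
          rw [Finset.mul_sum]
          exact Finset.sum_congr rfl fun l _ => by ring
        rw [this]
        congr 1
        rw [← real_inner_self_eq_norm_sq]
        nth_rewrite 2 [ww]
        have h2 : ∀ l ∈ Finset.range n, cc n k l * (inner ℝ (ww n v k) (v l) : ℝ)
            = (inner ℝ (cc n k l • v l) (ww n v k) : ℝ) := fun l _ => by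
          rw [real_inner_smul_left, real_inner_comm]
        rw [Finset.sum_congr rfl h2, sum_inner]

noncomputable def ss (n k l : ℕ) : ℝ := Real.sin (((l:ℝ) + 1) * k * (π / n))

lemma sinOrth (n k m : ℕ) (hn : 0 < n) (hk : 0 < k) (hk2 : k < n) (hm : 0 < m)
    (hm2 : m < n) :
    ∑ l ∈ Finset.range (n - 1), ss n k l * ss n m l = if k = m then (n:ℝ)/2 else 0 := by
  unfold ss
  rcases le_total m k with h | h
  · exact sinOrthAux n k m hn hk2 hm h
  · have h2 := sinOrthAux n m k hn hm2 hk h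
    have hcomm : ∑ l ∈ Finset.range (n - 1),
        Real.sin (((l:ℝ) + 1) * k * (π / n)) * Real.sin (((l:ℝ) + 1) * m * (π / n))
        = ∑ l ∈ Finset.range (n - 1),
            Real.sin (((l:ℝ) + 1) * m * (π / n)) * Real.sin (((l:ℝ) + 1) * k * (π / n)) :=
      Finset.sum_congr rfl fun l _ => mul_comm _ _
    rw [hcomm, h2]
    by_cases he : k = m
    · rw [if_pos he.symm, if_pos he]
    · rw [if_neg (fun hh => he hh.symm), if_neg he]

lemma ccdiff (n k l : ℕ) :
    cc n k (l+1) - cc n k l = -(2 * Real.sin ((k:ℝ) * (π / n) / 2)) * ss n k l := by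
  unfold cc ss
  rw [Real.cos_sub_cos]
  have e1 : ((((l+1:ℕ)):ℝ) + 1/2) * k * (π / n) + (((l:ℝ) + 1/2) * k * (π / n)) ≠ 0 ∨ True := Or.inr trivial
  have h1 : (((((l+1:ℕ)):ℝ) + 1/2) * k * (π / n) + ((l:ℝ) + 1/2) * k * (π / n)) / 2
      = ((l:ℝ) + 1) * k * (π / n) := by push_cast; ring
  have h2 : (((((l+1:ℕ)):ℝ) + 1/2) * k * (π / n) - ((l:ℝ) + 1/2) * k * (π / n)) / 2
      = (k:ℝ) * (π / n) / 2 := by push_cast; ring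
  rw [h1, h2]
  ring

lemma key3 {E : Type*} [NormedAddCommGroup E] [InnerProductSpace ℝ E]
    (n : ℕ) (hn : 0 < n) (v : ℕ → E) :
    ∑ l ∈ Finset.range (n - 1), ‖v (l + 1) - v l‖ ^ 2
      = ∑ k ∈ Finset.Ico 1 n,
          (2 / (n:ℝ)) * (4 * Real.sin ((k:ℝ) * (π / n) / 2) ^ 2) * ‖ww n v k‖ ^ 2 := by
  have hnR : (0:ℝ) < n := by exact_mod_cast hn
  set A : ℕ → ℝ := fun k => -(4 * Real.sin ((k:ℝ) * (π / n) / 2)) with hA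
  have hdl : ∀ l, l + 1 < n → v (l + 1) - v l
      = ∑ k ∈ Finset.Ico 1 n, ((n:ℝ)⁻¹ * (A k * ss n k l)) • ww n v k := by
    intro l hl
    have h1 := key1 n hn v (l+1) hl
    have h0 := key1 n hn v l (by omega)
    have hsplit : v (l+1) - v l
        = (v (l+1) - (n:ℝ)⁻¹ • ∑ k ∈ Finset.range n, v k)
          - (v l - (n:ℝ)⁻¹ • ∑ k ∈ Finset.range n, v k) := by abel
    rw [hsplit, h1, h0, ← smul_sub, ← Finset.sum_sub_distrib, Finset.smul_sum]
    refine Finset.sum_congr rfl fun k _ => ?_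
    rw [← sub_smul, smul_smul]
    congr 1
    have hccd := ccdiff n k l
    rw [hA]
    simp only []
    linear_combination 2 * (n:ℝ)⁻¹ * hccd
  calc ∑ l ∈ Finset.range (n-1), ‖v (l + 1) - v l‖ ^ 2
      = ∑ l ∈ Finset.range (n-1), ∑ k ∈ Finset.Ico 1 n, ∑ m ∈ Finset.Ico 1 n,
          ((((n:ℝ)⁻¹ * A k) * ((n:ℝ)⁻¹ * A m)) * (inner ℝ (ww n v k) (ww n v m) : ℝ))
            * (ss n k l * ss n m l) := by
        refine Finset.sum_congr rfl fun l hl => ?_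
        have hl' : l + 1 < n := by have := Finset.mem_range.mp hl; omega
        rw [← real_inner_self_eq_norm_sq, hdl l hl', sum_inner]
        refine Finset.sum_congr rfl fun k _ => ?_
        rw [real_inner_smul_left, inner_sum, Finset.mul_sum]
        refine Finset.sum_congr rfl fun m _ => ?_
        rw [real_inner_smul_right]
        ring
    _ = ∑ k ∈ Finset.Ico 1 n, ∑ m ∈ Finset.Ico 1 n,
          ((((n:ℝ)⁻¹ * A k) * ((n:ℝ)⁻¹ * A m)) * (inner ℝ (ww n v k) (ww n v m) : ℝ))
            * ∑ l ∈ Finset.range (n-1), ss n k l * ss n m l := by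
        rw [Finset.sum_comm]
        refine Finset.sum_congr rfl fun k _ => ?_
        rw [Finset.sum_comm]
        refine Finset.sum_congr rfl fun m _ => ?_
        rw [Finset.mul_sum]
    _ = ∑ k ∈ Finset.Ico 1 n, ∑ m ∈ Finset.Ico 1 n,
          (if k = m then
            ((((n:ℝ)⁻¹ * A k) * ((n:ℝ)⁻¹ * A m)) * (inner ℝ (ww n v k) (ww n v m) : ℝ))
              * ((n:ℝ)/2) else 0) := by
        refine Finset.sum_congr rfl fun k hk => Finset.sum_congr rfl fun m hm => ?_
        obtain ⟨hk1, hk2⟩ := Finset.mem_Ico.mp hk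
        obtain ⟨hm1, hm2⟩ := Finset.mem_Ico.mp hm
        rw [sinOrth n k m hn hk1 hk2 hm1 hm2]
        split_ifs <;> ring
    _ = ∑ k ∈ Finset.Ico 1 n,
          ((((n:ℝ)⁻¹ * A k) * ((n:ℝ)⁻¹ * A k)) * (inner ℝ (ww n v k) (ww n v k) : ℝ))
            * ((n:ℝ)/2) := by
        refine Finset.sum_congr rfl fun k hk => ?_
        rw [Finset.sum_ite_eq (Finset.Ico 1 n) k, if_pos hk]
    _ = ∑ k ∈ Finset.Ico 1 n,
          (2 / (n:ℝ)) * (4 * Real.sin ((k:ℝ) * (π / n) / 2) ^ 2) * ‖ww n v k‖ ^ 2 := by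
        refine Finset.sum_congr rfl fun k _ => ?_
        rw [real_inner_self_eq_norm_sq, hA]
        field_simp
        ring

/-- **discrete Poincaré/Wirtinger inequality on a chain.**
Let `v₀, …, v_L` be vectors in a real inner product space and
`v̄ = (1/(L+1)) ∑_{l=0}^L v_l` their mean. Then
`∑_{l=0}^L ‖v_l − v̄‖² ≤ (1 / (4 sin²(π / (2(L+1))))) ∑_{l=0}^{L−1} ‖v_{l+1} − v_l‖²`. -/
theorem discrete_poincare_chain {E : Type*} [NormedAddCommGroup E] [InnerProductSpace ℝ E]
    (L : ℕ) (v : ℕ → E) :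
    ∑ l ∈ Finset.range (L + 1),
        ‖v l - (((L : ℝ) + 1)⁻¹ • ∑ k ∈ Finset.range (L + 1), v k)‖ ^ 2
      ≤ (1 / (4 * Real.sin (Real.pi / (2 * ((L : ℝ) + 1))) ^ 2)) *
          ∑ l ∈ Finset.range L, ‖v (l + 1) - v l‖ ^ 2 := by
  have hπ := Real.pi_pos
  have hn : 0 < L + 1 := Nat.succ_pos L
  have hnR : (0:ℝ) < ((L+1:ℕ):ℝ) := by exact_mod_cast hn
  have hcast : ((L:ℝ) + 1) = ((L+1:ℕ):ℝ) := by push_cast; ring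
  rw [hcast, key2 (L+1) hn v]
  have h3 := key3 (L+1) hn v
  simp only [Nat.add_sub_cancel] at h3
  rw [h3, Finset.mul_sum]
  refine Finset.sum_le_sum fun k hk => ?_
  obtain ⟨hk1, hk2⟩ := Finset.mem_Ico.mp hk
  have hk1R : (1:ℝ) ≤ (k:ℝ) := by exact_mod_cast hk1
  have hk2R : (k:ℝ) ≤ ((L+1:ℕ):ℝ) := by exact_mod_cast le_of_lt hk2
  set nr : ℝ := ((L+1:ℕ):ℝ) with hnr
  have harg : (k:ℝ) * (π / nr) / 2 = (k:ℝ) * π / (2 * nr) := by ring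
  have hbase : π / (2 * nr) ∈ Set.Icc (-(π/2)) (π/2) := by
    constructor
    · have : (0:ℝ) < π / (2 * nr) := by positivity
      linarith
    · rw [div_le_div_iff₀ (by positivity) (by norm_num)]
      nlinarith
  have htop : (k:ℝ) * π / (2 * nr) ∈ Set.Icc (-(π/2)) (π/2) := by
    constructor
    · have : (0:ℝ) < (k:ℝ) * π / (2 * nr) := by positivity
      linarith
    · rw [div_le_div_iff₀ (by positivity) (by norm_num)]
      nlinarith
  have hle : π / (2 * nr) ≤ (k:ℝ) * π / (2 * nr) := by
    apply div_le_div_of_nonneg_right ?_ (by positivity)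
    nlinarith
  have hσs : Real.sin (π / (2 * nr)) ≤ Real.sin ((k:ℝ) * π / (2 * nr)) :=
    Real.strictMonoOn_sin.monotoneOn hbase htop hle
  have hσpos : 0 < Real.sin (π / (2 * nr)) := by
    apply Real.sin_pos_of_pos_of_lt_pi (by positivity)
    rw [div_lt_iff₀ (by positivity)]
    nlinarith
  set σ := Real.sin (π / (2 * nr)) with hσ
  set s := Real.sin ((k:ℝ) * (π / nr) / 2) with hs
  have hseq : s = Real.sin ((k:ℝ) * π / (2 * nr)) := by rw [hs, harg]
  have hs2 : σ^2 ≤ s^2 := by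
    rw [hseq]
    nlinarith
  have hW : (0:ℝ) ≤ ‖ww (L+1) v k‖^2 := sq_nonneg _
  have h2n : (0:ℝ) ≤ 2 / nr := by positivity
  rw [one_div, inv_mul_eq_div, le_div_iff₀ (by positivity)]
  have hkey : (0:ℝ) ≤ (2 / nr * ‖ww (L+1) v k‖^2) * (s^2 - σ^2) :=
    mul_nonneg (mul_nonneg h2n hW) (sub_nonneg.mpr hs2)
  nlinarith [hkey]
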